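/- Let F be a field of characteristic 2 and let μ, ν, φ be quadratic forms over F (μ and ν possibly singular) with φ nonsingular. If μ ⊥ φ ≅ ν ⊥ φ, then μ ≅ ν. -/

import Mathlib

open QuadraticMap MvPolynomial
open scoped TensorProduct

set_option synthInstance.maxHeartbeats 1000000
set_option maxHeartbeats 1000000


section Defs

variable {K : Type} [CommRing K]

/-- The binary quadratic form `[a,b] : (x,y) ↦ a·x² + x·y + b·y²`. -/
noncomputable def binQF (a b : K) : QuadraticForm K (Fin 2 → K) :=
  (Matrix.of ![![a, 1], ![0, b]]).toQuadraticMap'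

/-- The diagonal (totally singular) quadratic form `⟨c₁, …, c_s⟩`. -/
noncomputable def diagQF {s : ℕ} (c : Fin s → K) : QuadraticForm K (Fin s → K) :=
  QuadraticMap.weightedSumSquares K c

/-- The orthogonal sum `[a₁,b₁] ⊥ ⋯ ⊥ [a_r,b_r]` of binary forms. -/
noncomputable def binsQF {r : ℕ} (a b : Fin r → K) : QuadraticForm K (Fin r → Fin 2 → K) :=
  QuadraticMap.pi fun i => binQF (a i) (b i)

/-- The orthogonal sum of `m` hyperbolic planes `[0,0]`. -/
noncomputable def hypQF (K : Type) [CommRing K] (m : ℕ) :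
    QuadraticForm K (Fin m → Fin 2 → K) :=
  binsQF (fun _ => 0) (fun _ => 0)

/-- The `(n+1)`-fold quadratic Pfister form `⟨⟨a₁,…,aₙ⟩⟩_b ⊗ [1,c]`, i.e. the orthogonal
sum over all subsets `S ⊆ {1,…,n}` of `(∏_{i∈S} aᵢ)·[1,c]`. -/
noncomputable def pfisterQF (n : ℕ) (a : Fin n → K) (c : K) :
    QuadraticForm K (Finset (Fin n) → Fin 2 → K) :=
  QuadraticMap.pi fun S : Finset (Fin n) => (∏ i ∈ S, a i) • binQF 1 c

variable {V W : Type} [AddCommGroup V] [Module K V] [AddCommGroup W] [Module K W]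

/-- `φ` has type `(r,s)`: it is isometric to `[a₁,b₁] ⊥ ⋯ ⊥ [a_r,b_r] ⊥ ⟨c₁,…,c_s⟩`. -/
def HasTypeRS (φ : QuadraticForm K V) (r s : ℕ) : Prop :=
  ∃ (a b : Fin r → K) (c : Fin s → K), φ.Equivalent ((binsQF a b).prod (diagQF c))

/-- `φ` is dominated by `ψ`. -/
def Dominated (φ : QuadraticForm K V) (ψ : QuadraticForm K W) : Prop :=
  ∃ f : V →ₗ[K] W, Function.Injective f ∧ ∀ v, φ v = ψ (f v)

/-- `φ` is weakly dominated by `ψ`: `α·φ` is dominated by `ψ` for some unit `α`. -/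
def WeaklyDominated (φ : QuadraticForm K V) (ψ : QuadraticForm K W) : Prop :=
  ∃ α : Kˣ, Dominated ((α : K) • φ) ψ

/-- Witt equivalence of quadratic forms. -/
def WittEquiv (Q₁ : QuadraticForm K V) (Q₂ : QuadraticForm K W) : Prop :=
  ∃ k l : ℕ, (Q₁.prod (hypQF K k)).Equivalent (Q₂.prod (hypQF K l))

/-- `φ` is a Pfister neighbour: there is a quadratic Pfister form `π` with
`2·dim φ > dim π` and `φ ≺_w π`. -/
def IsPfisterNeighbour (φ : QuadraticForm K V) : Prop :=
  ∃ (n : ℕ) (a : Fin n → Kˣ) (c : K),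
    2 * Module.finrank K V > 2 ^ (n + 1) ∧
      WeaklyDominated φ (pfisterQF n (fun i => (a i : K)) c)

/-- The Artin–Schreier set `℘(K) = {t² + t : t ∈ K}`. -/
def ArtinSchreier (K : Type) [CommRing K] : Set K := {x : K | ∃ t : K, x = t ^ 2 + t}

end Defs

section FunField

variable (F : Type) [Field F]

/-- The coefficient matrix of a quadratic form on `Fin n → F` with respect to the
standard basis: diagonal entries `ψ(eᵢ)`, above-diagonal entries `b_ψ(eᵢ,eⱼ)`. -/
noncomputable def coeffMat {n : ℕ} (ψ : QuadraticForm F (Fin n → F)) :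
    Matrix (Fin n) (Fin n) F :=
  Matrix.of fun i j =>
    if i = j then ψ (Pi.single i 1)
    else if i < j then polar ψ (Pi.single i 1) (Pi.single j 1) else 0

/-- The homogeneous degree 2 polynomial `P_ψ` associated to a quadratic form `ψ`. -/
noncomputable def qfPoly {n : ℕ} (ψ : QuadraticForm F (Fin n → F)) :
    MvPolynomial (Fin n) F :=
  ∑ i : Fin n, ∑ j : Fin n, MvPolynomial.C (coeffMat F ψ i j) * (X i * X j)

/-- The affine coordinate ring `F[x₁,…,xₙ]/(P_ψ)` of the quadric `ψ = 0`. -/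
def FunFieldRing {n : ℕ} (ψ : QuadraticForm F (Fin n → F)) : Type :=
  MvPolynomial (Fin n) F ⧸ Ideal.span {qfPoly F ψ}

noncomputable instance {n : ℕ} (ψ : QuadraticForm F (Fin n → F)) :
    CommRing (FunFieldRing F ψ) :=
  inferInstanceAs (CommRing (MvPolynomial (Fin n) F ⧸ Ideal.span {qfPoly F ψ}))

noncomputable instance {n : ℕ} (ψ : QuadraticForm F (Fin n → F)) :
    Algebra F (FunFieldRing F ψ) :=
  inferInstanceAs (Algebra F (MvPolynomial (Fin n) F ⧸ Ideal.span {qfPoly F ψ}))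

/-- The function field `F(ψ)` of the quadric `ψ = 0`. -/
def FunField {n : ℕ} (ψ : QuadraticForm F (Fin n → F)) : Type :=
  FractionRing (FunFieldRing F ψ)

noncomputable instance {n : ℕ} (ψ : QuadraticForm F (Fin n → F)) :
    CommRing (FunField F ψ) :=
  inferInstanceAs (CommRing (FractionRing (FunFieldRing F ψ)))

noncomputable instance {n : ℕ} (ψ : QuadraticForm F (Fin n → F)) :
    Algebra (FunFieldRing F ψ) (FunField F ψ) :=
  inferInstanceAs (Algebra (FunFieldRing F ψ) (FractionRing (FunFieldRing F ψ)))

noncomputable instance {n : ℕ} (ψ : QuadraticForm F (Fin n → F)) :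
    Algebra F (FunField F ψ) :=
  inferInstanceAs (Algebra F (FractionRing (FunFieldRing F ψ)))

/-- The canonical map `F → F(ψ)`. -/
noncomputable def funFieldMap {n : ℕ} (ψ : QuadraticForm F (Fin n → F)) :
    F →+* FunField F ψ :=
  algebraMap F (FunField F ψ)

/-- Scalar extension of a quadratic form on `Fin n → F` along a ring homomorphism
`f : F → K`. -/
noncomputable def extendQF {K : Type} [CommRing K] (f : F →+* K) {n : ℕ}
    (φ : QuadraticForm F (Fin n → F)) : QuadraticForm K (Fin n → K) :=
  ((coeffMat F φ).map f).toQuadraticMap'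

end FunField


section Quat

variable (K : Type) [CommRing K]

/-- Defining relations for the char-2 quaternion algebra `[a,b)`: generators `i,j` with
`i² + i = a`, `j² = b`, `j·i = i·j + j` (i.e. `j·i·j⁻¹ = i + 1`). -/
inductive QuatRel (a b : K) : FreeAlgebra K (Fin 2) → FreeAlgebra K (Fin 2) → Prop
  | i_sq : QuatRel a b (FreeAlgebra.ι K 0 * FreeAlgebra.ι K 0 + FreeAlgebra.ι K 0)
      (algebraMap K _ a)
  | j_sq : QuatRel a b (FreeAlgebra.ι K 1 * FreeAlgebra.ι K 1) (algebraMap K _ b)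
  | swap : QuatRel a b (FreeAlgebra.ι K 1 * FreeAlgebra.ι K 0)
      (FreeAlgebra.ι K 0 * FreeAlgebra.ι K 1 + FreeAlgebra.ι K 1)

/-- The quaternion algebra `[a,b)` over `K` (characteristic two convention). -/
def QuatAlg (a b : K) : Type := RingQuot (QuatRel K a b)

noncomputable instance (a b : K) : Ring (QuatAlg K a b) :=
  inferInstanceAs (Ring (RingQuot (QuatRel K a b)))
noncomputable instance (a b : K) : Algebra K (QuatAlg K a b) :=
  inferInstanceAs (Algebra K (RingQuot (QuatRel K a b)))

/-- `[a,b)` is split over `K`: isomorphic to the `2×2` matrix algebra. -/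
def QuatSplit (a b : K) : Prop :=
  Nonempty (QuatAlg K a b ≃ₐ[K] Matrix (Fin 2) (Fin 2) K)

end Quat

section Sqrt

variable (F : Type) [Field F]

/-- The field `F(√c₁,…,√c_s)` obtained by adjoining square roots of the `cᵢ`
(inside an algebraic closure of `F`). -/
noncomputable def sqrtExt {s : ℕ} (c : Fin s → F) :
    IntermediateField F (AlgebraicClosure F) :=
  IntermediateField.adjoin F
    {y : AlgebraicClosure F | ∃ i, y ^ 2 = algebraMap F (AlgebraicClosure F) (c i)}

/-- The subfield `F² = {x² : x ∈ F}` of squares of a field of characteristic 2. -/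
noncomputable def sqSubfield : Subfield F := Subfield.closure (Set.range fun x : F => x ^ 2)

set_option synthInstance.maxHeartbeats 1000000 in
/-- The norm degree `[F²(cᵢ·cⱼ) : F²]` of a diagonal form `⟨c₁,…,c_s⟩`. -/
noncomputable def normDegree {s : ℕ} (c : Fin s → F) : ℕ :=
  Module.finrank (sqSubfield F)
    (IntermediateField.adjoin (sqSubfield F)
      (Set.range fun p : Fin s × Fin s => c p.1 * c p.2))

end Sqrt

/-- A ring is a division algebra if it is nontrivial and every nonzero element is a unit. -/
def IsDivisionAlgebra (T : Type) [Ring T] : Prop :=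
  (0 : T) ≠ 1 ∧ ∀ x : T, x ≠ 0 → IsUnit x


section Moves

variable {F V : Type} [Field F] [CharP F 2] [AddCommGroup V] [Module F V]
  {Q : QuadraticForm F V}

lemma polar_self_eq_zero (x : V) : polar Q x x = 0 := by
  rw [polar_self, CharTwo.two_nsmul]

lemma q_add (x y : V) : Q (x + y) = Q x + Q y + polar Q x y := by
  simp [polar]

lemma polar_iso {V₂ : Type} [AddCommGroup V₂] [Module F V₂] {Q₂ : QuadraticForm F V₂}
    (τ : Q.IsometryEquiv Q₂) (x y : V) : polar Q₂ (τ x) (τ y) = polar Q x y := by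
  simp [polar, ← map_add]

/-- Package an involutive isometric linear map as an isometry equivalence. -/
def mkIso (f : V →ₗ[F] V) (hinv : ∀ x, f (f x) = x) (hq : ∀ x, Q (f x) = Q x) :
    Q.IsometryEquiv Q where
  toFun := f
  invFun := f
  left_inv := hinv
  right_inv := hinv
  map_add' := f.map_add
  map_smul' := f.map_smul
  map_app' := hq

/-- The transvection `x ↦ x + (polar x w / Q w) • w` as a linear map. -/
noncomputable def tvL (Q : QuadraticForm F V) (w : V) : V →ₗ[F] V where
  toFun x := x + ((Q w)⁻¹ * polar Q x w) • w
  map_add' x y := by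
    simp only [polar_add_left, mul_add, add_smul]; abel
  map_smul' t x := by
    simp only [polar_smul_left, smul_eq_mul, RingHom.id_apply, smul_add, smul_smul]
    ring_nf

lemma tvL_apply (w x : V) : tvL Q w x = x + ((Q w)⁻¹ * polar Q x w) • w := rfl

noncomputable def transvection (w : V) (hw : Q w ≠ 0) : Q.IsometryEquiv Q := by
  refine mkIso (tvL Q w) (fun x => ?_) (fun x => ?_)
  · have hpw : polar Q (tvL Q w x) w = polar Q x w := by
      rw [tvL_apply, polar_add_left, polar_smul_left, polar_self_eq_zero]
      simp
    rw [tvL_apply, hpw, tvL_apply, add_assoc, ← add_smul]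
    rw [CharTwo.add_self_eq_zero, zero_smul, add_zero]
  · rw [tvL_apply, q_add, QuadraticMap.map_smul, polar_smul_right]
    simp only [smul_eq_mul]
    have h1 : (Q w)⁻¹ * polar Q x w * ((Q w)⁻¹ * polar Q x w) * Q w
        = (Q w)⁻¹ * polar Q x w * polar Q x w := by
      field_simp
    rw [h1, add_assoc, CharTwo.add_self_eq_zero, add_zero]

lemma transvection_apply (w x : V) (hw : Q w ≠ 0) :
    transvection w hw x = x + ((Q w)⁻¹ * polar Q x w) • w := rfl

/-- The Eichler transformation `x ↦ x + polar x y • z + polar x z • y + (polar x z * Q y) • z`,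
for `z` isotropic orthogonal to `y`, as a linear map. -/
noncomputable def eiL (Q : QuadraticForm F V) (z y : V) : V →ₗ[F] V where
  toFun x := x + polar Q x y • z + polar Q x z • y + (polar Q x z * Q y) • z
  map_add' x y' := by
    simp only [polar_add_left, add_smul, add_mul]; abel
  map_smul' t x := by
    simp only [polar_smul_left, smul_eq_mul, RingHom.id_apply, smul_add, smul_smul, mul_assoc]

lemma eiL_apply (z y x : V) :
    eiL Q z y x = x + polar Q x y • z + polar Q x z • y + (polar Q x z * Q y) • z := rfl

noncomputable def eichler (z y : V) (hz : Q z = 0) (hzy : polar Q z y = 0) :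
    Q.IsometryEquiv Q := by
  have hyz : polar Q y z = 0 := by rw [polar_comm]; exact hzy
  have key : ∀ x : V, polar Q (eiL Q z y x) y = polar Q x y ∧ polar Q (eiL Q z y x) z = polar Q x z := by
    intro x
    constructor
    · rw [eiL_apply]
      simp only [polar_add_left, polar_smul_left, smul_eq_mul, hzy, hyz, polar_self_eq_zero]
      ring
    · rw [eiL_apply]
      simp only [polar_add_left, polar_smul_left, smul_eq_mul, hzy, hyz, polar_self_eq_zero]
      ring
  have hv : ∀ v : V, v + v = 0 := fun v => by
    rw [← two_smul F v, show (2 : F) = 0 from CharTwo.two_eq_zero, zero_smul]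
  refine mkIso (eiL Q z y) (fun x => ?_) (fun x => ?_)
  · obtain ⟨h1, h2⟩ := key x
    rw [eiL_apply (x := eiL Q z y x), h1, h2, eiL_apply]
    have habc : ∀ a b c xx : V, xx + a + b + c + a + b + c = xx + (a + a) + (b + b) + (c + c) := by
      intros; abel
    rw [habc, hv, hv, hv, add_zero, add_zero, add_zero]
  · rw [eiL_apply]
    simp only [q_add, QuadraticMap.map_smul, smul_eq_mul, polar_smul_left, polar_smul_right,
      polar_add_left, polar_add_right, hz, hzy, hyz, polar_self_eq_zero]
    ring_nf
    rw [show (2 : F) = 0 from CharTwo.two_eq_zero]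
    ring



lemma add_self_v (Q : QuadraticForm F V) (v : V) : v + v = 0 := by
  rw [← two_smul F v, show (2 : F) = 0 from CharTwo.two_eq_zero, zero_smul]

lemma eichler_apply (z y : V) (hz : Q z = 0) (hzy : polar Q z y = 0) (x : V) :
    eichler z y hz hzy x
      = x + polar Q x y • z + polar Q x z • y + (polar Q x z * Q y) • z := rfl

lemma q_add_eq_polar {u v : V} (huv : Q u = Q v) : Q (u + v) = polar Q u v := by
  rw [q_add, huv, CharTwo.add_self_eq_zero, zero_add]

/-- Transvection in `u + v` moves `u` to `v` and fixes everything orthogonal to `u+v`. -/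
lemma tau_basic {u v : V} (huv : Q u = Q v) (hp : polar Q u v ≠ 0) :
    ∃ τ : Q.IsometryEquiv Q, τ u = v ∧ ∀ x, polar Q x (u + v) = 0 → τ x = x := by
  have hw : Q (u + v) ≠ 0 := by rw [q_add_eq_polar huv]; exact hp
  refine ⟨transvection (u + v) hw, ?_, fun x hx => ?_⟩
  · rw [transvection_apply]
    have h1 : polar Q u (u + v) = Q (u + v) := by
      rw [polar_add_right, polar_self_eq_zero, zero_add, q_add_eq_polar huv]
    rw [h1, inv_mul_cancel₀ hw, one_smul, ← add_assoc, add_self_v Q, zero_add]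
  · rw [transvection_apply, hx, mul_zero, zero_smul, add_zero]

lemma double_move {u v w : V} (huv : Q u = Q v) (hpuv : polar Q u v = 0) (hw : Q w ≠ 0)
    (h1 : polar Q u w ≠ 0) (h2 : polar Q v w ≠ 0) :
    ∃ τ : Q.IsometryEquiv Q, τ u = v := by
  set σ := transvection w hw with hσ
  have hq1 : Q (σ u) = Q v := by rw [IsometryEquiv.map_app]; exact huv
  have hpol : polar Q (σ u) v = ((Q w)⁻¹ * polar Q u w) * polar Q v w := by
    rw [hσ, transvection_apply, polar_add_left, hpuv, polar_smul_left, zero_add,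
      smul_eq_mul, polar_comm Q w v]
  have hne : polar Q (σ u) v ≠ 0 := by
    rw [hpol]
    exact mul_ne_zero (mul_ne_zero (inv_ne_zero hw) h1) h2
  obtain ⟨τ₂, hτ₂, -⟩ := tau_basic hq1 hne
  exact ⟨σ.trans τ₂, hτ₂⟩

lemma eichler_move {u v z : V} (huv : Q u = Q v) (hpuv : polar Q u v = 0) (hz : Q z = 0)
    (h1 : polar Q u z ≠ 0) (heq : polar Q u z = polar Q v z) :
    ∃ τ : Q.IsometryEquiv Q, τ u = v := by
  set y := (polar Q u z)⁻¹ • (u + v) with hy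
  have hzy : polar Q z y = 0 := by
    rw [hy, polar_smul_right, polar_add_right, polar_comm Q z u, polar_comm Q z v, ← heq,
      CharTwo.add_self_eq_zero, smul_zero]
  refine ⟨eichler z y hz hzy, ?_⟩
  rw [eichler_apply]
  have hqy : Q y = 0 := by
    rw [hy, QuadraticMap.map_smul, q_add_eq_polar huv, hpuv, smul_zero]
  have hpy : polar Q u y = 0 := by
    rw [hy, polar_smul_right, polar_add_right, polar_self_eq_zero, hpuv, add_zero, smul_zero]
  simp only [hpy, hqy, mul_zero, zero_smul, add_zero]
  rw [hy, smul_smul, mul_inv_cancel₀ h1, one_smul, ← add_assoc, add_self_v Q, zero_add]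

lemma move_one {u v u₂ v₂ : V} (huv : Q u = Q v)
    (h2 : polar Q u u₂ ≠ 0) (h3 : polar Q v v₂ ≠ 0) :
    ∃ τ : Q.IsometryEquiv Q, τ u = v := by
  by_cases hp : polar Q u v ≠ 0
  · obtain ⟨τ, hτ, -⟩ := tau_basic huv hp
    exact ⟨τ, hτ⟩
  push_neg at hp
  obtain ⟨w, hw1, hw2⟩ : ∃ w, polar Q u w ≠ 0 ∧ polar Q v w ≠ 0 := by
    by_cases ha : polar Q v u₂ ≠ 0
    · exact ⟨u₂, h2, ha⟩
    by_cases hb : polar Q u v₂ ≠ 0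
    · exact ⟨v₂, hb, h3⟩
    push_neg at ha hb
    refine ⟨u₂ + (polar Q u u₂ / polar Q v v₂) • v₂, ?_, ?_⟩
    · rw [polar_add_right, polar_smul_right, hb, smul_zero, add_zero]; exact h2
    · rw [polar_add_right, polar_smul_right, ha, zero_add, smul_eq_mul,
        div_mul_cancel₀ _ h3]; exact h2
  have hpu : polar Q u (w + u) = polar Q u w := by
    rw [polar_add_right, polar_self_eq_zero, add_zero]
  have hpv : polar Q v (w + v) = polar Q v w := by
    rw [polar_add_right, polar_self_eq_zero, add_zero]
  by_cases hqw : Q w ≠ 0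
  · exact double_move huv hp hqw hw1 hw2
  by_cases hqwu : Q (w + u) ≠ 0
  · refine double_move huv hp hqwu (by rw [hpu]; exact hw1) ?_
    rw [polar_add_right, polar_comm Q v u, hp, add_zero]; exact hw2
  by_cases hqwv : Q (w + v) ≠ 0
  · refine double_move huv hp hqwv ?_ (by rw [hpv]; exact hw2)
    rw [polar_add_right, hp, add_zero]; exact hw1
  push_neg at hqw hqwu hqwv
  have e1 : polar Q u w = Q u := by
    have := hqwu
    rw [q_add, hqw, zero_add, polar_comm Q w u] at this
    have h' := eq_neg_of_add_eq_zero_right this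
    rwa [CharTwo.neg_eq] at h'
  have e2 : polar Q v w = Q v := by
    have := hqwv
    rw [q_add, hqw, zero_add, polar_comm Q w v] at this
    have h' := eq_neg_of_add_eq_zero_right this
    rwa [CharTwo.neg_eq] at h'
  exact eichler_move huv hp hqw hw1 (by rw [e1, e2, huv])

lemma move_fix {e f₁ f₂ : V} (hq : Q f₁ = Q f₂)
    (h1 : polar Q e f₁ = 1) (h2 : polar Q e f₂ = 1) :
    ∃ τ : Q.IsometryEquiv Q, τ e = e ∧ τ f₁ = f₂ := by
  have hpef : polar Q e (f₁ + f₂) = 0 := by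
    rw [polar_add_right, h1, h2, CharTwo.add_self_eq_zero]
  by_cases hp : polar Q f₁ f₂ ≠ 0
  · obtain ⟨τ, hτ, hfix⟩ := tau_basic hq hp
    exact ⟨τ, hfix e hpef, hτ⟩
  push_neg at hp
  set z := f₁ + f₂ with hzdef
  set y := e + f₁ + f₂ with hydef
  have hz : Q z = 0 := by rw [hzdef, q_add_eq_polar hq, hp]
  have hf1z : polar Q f₁ z = 0 := by
    rw [hzdef, polar_add_right, polar_self_eq_zero, hp, add_zero]
  have hez : polar Q e z = 0 := hpef
  have hzy : polar Q z y = 0 := by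
    rw [hydef, polar_add_right, polar_add_right, polar_comm Q z e, hez,
      polar_comm Q z f₁, hf1z, zero_add, zero_add, hzdef, polar_add_left,
      polar_self_eq_zero, add_zero, hp]
  refine ⟨eichler z y hz hzy, ?_, ?_⟩
  · rw [eichler_apply, hez, zero_smul, zero_mul, zero_smul, add_zero, add_zero]
    have hey : polar Q e y = 0 := by
      rw [hydef, polar_add_right, polar_add_right, polar_self_eq_zero, h1, h2,
        zero_add, CharTwo.add_self_eq_zero]
    rw [hey, zero_smul, add_zero]
  · rw [eichler_apply, hf1z, zero_smul, zero_mul, zero_smul, add_zero, add_zero]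
    have hf1y : polar Q f₁ y = 1 := by
      rw [hydef, polar_add_right, polar_add_right, polar_comm Q f₁ e, h1,
        polar_self_eq_zero, hp, add_zero, add_zero]
    rw [hf1y, one_smul, hzdef, ← add_assoc, add_self_v Q, zero_add]

lemma move_pair {u v u₂ v₂ : V} (h1 : Q u = Q v) (h2 : Q u₂ = Q v₂)
    (h3 : polar Q u u₂ = 1) (h4 : polar Q v v₂ = 1) :
    ∃ τ : Q.IsometryEquiv Q, τ u = v ∧ τ u₂ = v₂ := by
  obtain ⟨τ₁, hτ₁⟩ := move_one h1 (h3 ▸ one_ne_zero) (h4 ▸ one_ne_zero)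
  have ha : Q (τ₁ u₂) = Q v₂ := by rw [IsometryEquiv.map_app]; exact h2
  have hb : polar Q v (τ₁ u₂) = 1 := by rw [← hτ₁, polar_iso]; exact h3
  obtain ⟨τ₂, he, hf⟩ := move_fix ha hb h4
  refine ⟨τ₁.trans τ₂, ?_, ?_⟩
  · show τ₂ (τ₁ u) = v
    rw [hτ₁, he]
  · show τ₂ (τ₁ u₂) = v₂
    rw [hf]

end Moves

section Cancel

variable {F : Type} [Field F] [CharP F 2]

lemma binQF_apply (a b : F) (x : Fin 2 → F) :
    binQF a b x = a * (x 0 * x 0) + x 0 * x 1 + b * (x 1 * x 1) := by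
  simp [binQF, Matrix.toQuadraticMap', Matrix.toQuadraticForm', LinearMap.BilinMap.toQuadraticMap_apply,
    Matrix.toLinearMap₂'_apply, Fin.sum_univ_two, Matrix.of_apply]
  ring

lemma polar_binQF (a b : F) (x y : Fin 2 → F) :
    polar (binQF a b) x y = x 0 * y 1 + x 1 * y 0 := by
  rw [polar, binQF_apply, binQF_apply, binQF_apply]
  simp only [Pi.add_apply]
  ring_nf
  rw [show (2 : F) = 0 from CharTwo.two_eq_zero]
  ring

/-- Cancellation of a single nonsingular binary plane. -/
lemma cancel_plane {V₁ V₂ : Type} [AddCommGroup V₁] [Module F V₁]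
    [AddCommGroup V₂] [Module F V₂] (μ : QuadraticForm F V₁) (ν : QuadraticForm F V₂)
    (a b : F) (h : (μ.prod (binQF a b)).Equivalent (ν.prod (binQF a b))) :
    μ.Equivalent ν := by
  obtain ⟨σ⟩ := h
  set P : QuadraticForm F (Fin 2 → F) := binQF a b with hP
  set e : Fin 2 → F := ![1, 0] with he
  set f : Fin 2 → F := ![0, 1] with hf
  have hPe : P e = a := by rw [hP, binQF_apply]; simp [he]
  have hPf : P f = b := by rw [hP, binQF_apply]; simp [hf]
  have hPef : polar P e f = 1 := by rw [hP, polar_binQF]; simp [he, hf]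
  have hpolx : ∀ x : Fin 2 → F, polar P x e = x 1 := by
    intro x; rw [hP, polar_binQF]; simp [he]
  have hpoly : ∀ x : Fin 2 → F, polar P x f = x 0 := by
    intro x; rw [hP, polar_binQF]; simp [hf]
  set u : V₂ × (Fin 2 → F) := σ (0, e) with hu
  set u₂ : V₂ × (Fin 2 → F) := σ (0, f) with hu₂
  set v : V₂ × (Fin 2 → F) := (0, e) with hv
  set v₂ : V₂ × (Fin 2 → F) := (0, f) with hv₂
  have h1 : (ν.prod P) u = (ν.prod P) v := by
    rw [hu, IsometryEquiv.map_app, hv, QuadraticMap.prod_apply,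
      QuadraticMap.prod_apply, QuadraticMap.map_zero, QuadraticMap.map_zero]
  have h2 : (ν.prod P) u₂ = (ν.prod P) v₂ := by
    rw [hu₂, IsometryEquiv.map_app, hv₂, QuadraticMap.prod_apply,
      QuadraticMap.prod_apply, QuadraticMap.map_zero, QuadraticMap.map_zero]
  have h3 : polar (ν.prod P) u u₂ = 1 := by
    rw [hu, hu₂, polar_iso, polar_prod]
    simp [hPef]
  have h4 : polar (ν.prod P) v v₂ = 1 := by
    rw [hv, hv₂, polar_prod]
    simp [hPef]
  obtain ⟨τ, hτ1, hτ2⟩ := move_pair h1 h2 h3 h4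
  set ρ := σ.trans τ with hρ
  have hρe : ρ (0, e) = (0, e) := hτ1
  have hρf : ρ (0, f) = (0, f) := hτ2
  -- any vector of the form (x, 0) is sent into V₂ × {0}
  have hsnd : ∀ x : V₁, (ρ (x, 0)).2 = 0 := by
    intro x
    have k1 : polar (ν.prod P) (ρ (x, 0)) (0, e) = 0 := by
      rw [← hρe, polar_iso, polar_prod]
      simp [polar]
    have k2 : polar (ν.prod P) (ρ (x, 0)) (0, f) = 0 := by
      rw [← hρf, polar_iso, polar_prod]
      simp [polar]
    rw [polar_prod, polar_zero_right, zero_add, hpolx] at k1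
    rw [polar_prod, polar_zero_right, zero_add, hpoly] at k2
    funext i
    fin_cases i
    · exact k2
    · exact k1
  have hsnd' : ∀ y : V₂, (ρ.symm (y, 0)).2 = 0 := by
    intro y
    have hre : ρ.symm (0, e) = (0, e) := by
      rw [← hρe]; exact (ρ.toLinearEquiv.symm_apply_apply _)
    have hrf : ρ.symm (0, f) = (0, f) := by
      rw [← hρf]; exact (ρ.toLinearEquiv.symm_apply_apply _)
    have k1 : polar (μ.prod P) (ρ.symm (y, 0)) (0, e) = 0 := by
      rw [← hre, polar_iso ρ.symm, polar_prod]
      simp [polar]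
    have k2 : polar (μ.prod P) (ρ.symm (y, 0)) (0, f) = 0 := by
      rw [← hrf, polar_iso ρ.symm, polar_prod]
      simp [polar]
    rw [polar_prod, polar_zero_right, zero_add, hpolx] at k1
    rw [polar_prod, polar_zero_right, zero_add, hpoly] at k2
    funext i
    fin_cases i
    · exact k2
    · exact k1
  set g : V₁ →ₗ[F] V₂ :=
    (LinearMap.fst F V₂ (Fin 2 → F)).comp
      ((ρ.toLinearEquiv : V₁ × (Fin 2 → F) →ₗ[F] V₂ × (Fin 2 → F)).comp
        (LinearMap.inl F V₁ (Fin 2 → F))) with hg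
  have hgapp : ∀ x : V₁, g x = (ρ (x, 0)).1 := fun x => rfl
  have hρx : ∀ x : V₁, ρ (x, 0) = (g x, 0) := by
    intro x
    refine Prod.ext (hgapp x).symm ?_
    exact hsnd x
  have hbij : Function.Bijective g := by
    constructor
    · intro x y hxy
      have : ρ (x, 0) = ρ (y, 0) := by rw [hρx, hρx, hxy]
      have := ρ.toLinearEquiv.injective this
      exact congrArg Prod.fst this
    · intro y
      refine ⟨(ρ.symm (y, 0)).1, ?_⟩
      have hz : ((ρ.symm (y, 0)).1, (0 : Fin 2 → F)) = ρ.symm (y, 0) := by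
        refine Prod.ext rfl ?_
        exact (hsnd' y).symm
      have h5 : ρ (((ρ.symm (y, 0)).1, (0 : Fin 2 → F))) = (y, 0) := by
        rw [hz]
        exact ρ.toLinearEquiv.apply_symm_apply _
      exact congrArg Prod.fst ((hρx _).symm.trans h5)
  refine ⟨⟨LinearEquiv.ofBijective g hbij, ?_⟩⟩
  intro x
  show ν (g x) = μ x
  have : (ν.prod P) (ρ (x, 0)) = (μ.prod P) (x, 0) := IsometryEquiv.map_app ρ (x, 0)
  rw [hρx x] at this
  rw [QuadraticMap.prod_apply, QuadraticMap.prod_apply, QuadraticMap.map_zero,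
    add_zero, add_zero] at this
  exact this

/-- `binsQF` over `Fin (r+1)` splits off its first plane. -/
noncomputable def binsSplit {r : ℕ} (a b : Fin (r + 1) → F) :
    (binsQF a b).IsometryEquiv
      ((binQF (a 0) (b 0)).prod (binsQF (fun i => a i.succ) (fun i => b i.succ))) where
  toFun x := (x 0, fun i => x i.succ)
  invFun p := Fin.cons p.1 p.2
  left_inv x := Fin.cons_self_tail x
  right_inv p := by
    refine Prod.ext ?_ ?_
    · show (Fin.cons p.1 p.2 : ∀ _ : Fin (r + 1), Fin 2 → F) 0 = p.1
      exact Fin.cons_zero _ _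
    · show (fun i => (Fin.cons p.1 p.2 : ∀ _ : Fin (r + 1), Fin 2 → F) i.succ) = p.2
      funext i
      exact Fin.cons_succ _ _ _
  map_add' x y := rfl
  map_smul' t x := rfl
  map_app' x := by
    rw [QuadraticMap.prod_apply, binsQF, binsQF, QuadraticMap.pi_apply,
      QuadraticMap.pi_apply, Fin.sum_univ_succ]

/-- Associativity isometry for orthogonal sums. -/
noncomputable def prodAssocIso {A B C : Type} [AddCommGroup A] [Module F A]
    [AddCommGroup B] [Module F B] [AddCommGroup C] [Module F C]
    (qa : QuadraticForm F A) (qb : QuadraticForm F B) (qc : QuadraticForm F C) :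
    ((qa.prod qb).prod qc).IsometryEquiv (qa.prod (qb.prod qc)) where
  toFun x := (x.1.1, (x.1.2, x.2))
  invFun y := ((y.1, y.2.1), y.2.2)
  left_inv x := rfl
  right_inv y := rfl
  map_add' x y := rfl
  map_smul' t x := rfl
  map_app' x := by simp [QuadraticMap.prod_apply, add_assoc]

/-- `μ ⊥ (empty form) ≅ μ`. -/
noncomputable def prodEmpty {V : Type} [AddCommGroup V] [Module F V]
    (μ : QuadraticForm F V) (a b : Fin 0 → F) :
    (μ.prod (binsQF a b)).IsometryEquiv μ where
  toFun p := p.1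
  invFun x := (x, 0)
  left_inv p := Prod.ext rfl (funext fun i => i.elim0)
  right_inv x := rfl
  map_add' x y := rfl
  map_smul' t x := rfl
  map_app' p := by
    rw [QuadraticMap.prod_apply, binsQF, QuadraticMap.pi_apply]
    simp

lemma cancel_bins : ∀ (r : ℕ) (a b : Fin r → F) {V₁ V₂ : Type}
    [AddCommGroup V₁] [Module F V₁] [AddCommGroup V₂] [Module F V₂]
    (μ : QuadraticForm F V₁) (ν : QuadraticForm F V₂),
    (μ.prod (binsQF a b)).Equivalent (ν.prod (binsQF a b)) → μ.Equivalent ν := by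
  intro r
  induction r with
  | zero =>
    intro a b V₁ V₂ _ _ _ _ μ ν h
    exact ⟨((prodEmpty μ a b).symm.trans h.some).trans (prodEmpty ν a b)⟩
  | succ r ih =>
    intro a b V₁ V₂ _ _ _ _ μ ν h
    set a' : Fin r → F := fun i => a i.succ
    set b' : Fin r → F := fun i => b i.succ
    have split : ∀ {V : Type} [AddCommGroup V] [Module F V] (q : QuadraticForm F V),
        (q.prod (binsQF a b)).Equivalent ((q.prod (binQF (a 0) (b 0))).prod (binsQF a' b')) := by
      intro V _ _ q
      exact ⟨((QuadraticMap.IsometryEquiv.refl q).prod (binsSplit a b)).trans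
        (prodAssocIso q (binQF (a 0) (b 0)) (binsQF a' b')).symm⟩
    have h' : ((μ.prod (binQF (a 0) (b 0))).prod (binsQF a' b')).Equivalent
        ((ν.prod (binQF (a 0) (b 0))).prod (binsQF a' b')) :=
      ((split μ).symm.trans h).trans (split ν)
    exact cancel_plane μ ν (a 0) (b 0) (ih a' b' _ _ h')

end Cancel

theorem stmt12 (F : Type) [Field F] [CharP F 2]
    {V₁ V₂ W : Type} [AddCommGroup V₁] [Module F V₁] [FiniteDimensional F V₁]
    [AddCommGroup V₂] [Module F V₂] [FiniteDimensional F V₂]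
    [AddCommGroup W] [Module F W]
    (μ : QuadraticForm F V₁) (ν : QuadraticForm F V₂) (φ : QuadraticForm F W)
    (hφns : ∃ (r : ℕ) (a b : Fin r → F), φ.Equivalent (binsQF a b))
    (h : (μ.prod φ).Equivalent (ν.prod φ)) :
    μ.Equivalent ν := by
  obtain ⟨r, a, b, hφ⟩ := hφns
  have h' : (μ.prod (binsQF a b)).Equivalent (ν.prod (binsQF a b)) := by
    have l : (μ.prod (binsQF a b)).Equivalent (μ.prod φ) :=
      QuadraticMap.Equivalent.prod ⟨QuadraticMap.IsometryEquiv.refl μ⟩ hφ.symm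
    have rr : (ν.prod φ).Equivalent (ν.prod (binsQF a b)) :=
      QuadraticMap.Equivalent.prod ⟨QuadraticMap.IsometryEquiv.refl ν⟩ hφ
    exact (l.trans h).trans rr
  exact cancel_bins r a b μ ν h'
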